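/- Let A : ℝⁿ ⇉ ℝⁿ be a maximally monotone symmetric linear relation, and define q_A(x) = (1/2)⟨x, A x⟩ for x ∈ dom A and q_A(x) = ∞ otherwise. Then the Fenchel conjugate satisfies (q_A)* = q_{A⁻¹}, i.e., (q_A)*(y) = (1/2)⟨y, A⁻¹ y⟩ if y ∈ ran A and ∞ otherwise. -/

import Mathlib

open scoped RealInnerProductSpace

abbrev Euc (n : ℕ) := EuclideanSpace ℝ (Fin n)

noncomputable def moreauEnv {E : Type*} [NormedAddCommGroup E] [InnerProductSpace ℝ E]
    (r : ℝ) (f : E → EReal) (x : E) : EReal :=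
  ⨅ y : E, f y + ((r / 2 * ‖y - x‖ ^ 2 : ℝ) : EReal)

noncomputable def fenchel {E : Type*} [NormedAddCommGroup E] [InnerProductSpace ℝ E]
    (f : E → EReal) (y : E) : EReal :=
  ⨆ x : E, ((⟪y, x⟫ : ℝ) : EReal) - f x

def ProperFn {E : Type*} (f : E → EReal) : Prop :=
  (∃ x, f x ≠ ⊤) ∧ ∀ x, f x ≠ ⊥

def EConvexFn {E : Type*} [AddCommGroup E] [Module ℝ E] (f : E → EReal) : Prop :=
  ∀ x y : E, ∀ a b : ℝ, 0 ≤ a → 0 ≤ b → a + b = 1 →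
    f (a • x + b • y) ≤ (a : EReal) * f x + (b : EReal) * f y

def SymRel {n : ℕ} (A : Set (Euc n × Euc n)) : Prop :=
  ∀ p ∈ A, ∀ q ∈ A, ⟪p.1, q.2⟫ = ⟪q.1, p.2⟫

def MonoRel {n : ℕ} (A : Set (Euc n × Euc n)) : Prop :=
  ∀ p ∈ A, ∀ q ∈ A, 0 ≤ ⟪p.1 - q.1, p.2 - q.2⟫

def MaxMonoRel {n : ℕ} (A : Set (Euc n × Euc n)) : Prop :=
  MonoRel A ∧ ∀ p : Euc n × Euc n, (∀ q ∈ A, 0 ≤ ⟪p.1 - q.1, p.2 - q.2⟫) → p ∈ A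

noncomputable def qrel {n : ℕ} (A : Set (Euc n × Euc n)) (x : Euc n) : EReal :=
  ⨅ (u : Euc n) (_ : (x, u) ∈ A), ((1 / 2 * ⟪x, u⟫ : ℝ) : EReal)

def esubdiff {E : Type*} [NormedAddCommGroup E] [InnerProductSpace ℝ E]
    (f : E → EReal) (x : E) : Set E :=
  {u | ∀ y, f x + ((⟪u, y - x⟫ : ℝ) : EReal) ≤ f y}

theorem stmt11 {n : ℕ} (A : Submodule ℝ (Euc n × Euc n))
    (hsym : SymRel (A : Set (Euc n × Euc n)))
    (hmax : MaxMonoRel (A : Set (Euc n × Euc n))) (y : Euc n) :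
    fenchel (qrel (A : Set (Euc n × Euc n))) y
      = qrel {p : Euc n × Euc n | (p.2, p.1) ∈ A} y := by
  have hmono := hmax.1
  have hpos : ∀ p ∈ (A : Set (Euc n × Euc n)), (0:ℝ) ≤ ⟪p.1, p.2⟫ := by
    intro p hp
    have := hmono p hp (0,0) (A.zero_mem)
    simpa using this
  have hqval : ∀ x u, (x,u) ∈ (A : Set (Euc n × Euc n)) →
      qrel (A : Set (Euc n × Euc n)) x = ((1/2 * ⟪x,u⟫ : ℝ) : EReal) := by
    intro x u hu
    have key : ∀ u', (x,u') ∈ (A : Set (Euc n × Euc n)) → ⟪x,u'⟫ = ⟪x,u⟫ := by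
      intro u' hu'
      have hmem : ((0, u' - u) : Euc n × Euc n) ∈ (A : Set _) := by
        have := A.sub_mem hu' hu
        simpa using this
      have h1 := hsym (x,u) hu (0, u'-u) hmem
      simp only [inner_zero_left] at h1
      have h2 := inner_sub_right (𝕜 := ℝ) x u' u
      rw [h1] at h2
      linarith
    apply le_antisymm
    · exact iInf_le_of_le u (iInf_le_of_le hu le_rfl)
    · refine le_iInf fun u' => le_iInf fun hu' => ?_
      rw [key u' hu']
  rcases Classical.em (∃ v, (v, y) ∈ (A : Set (Euc n × Euc n))) with ⟨v, hv⟩ | hy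
  · -- y ∈ ran A
    have hSval : qrel {p : Euc n × Euc n | (p.2, p.1) ∈ A} y
        = ((1/2 * ⟪y,v⟫ : ℝ) : EReal) := by
      apply le_antisymm
      · exact iInf_le_of_le v (iInf_le_of_le hv le_rfl)
      · refine le_iInf fun v' => le_iInf fun hv' => ?_
        have hv' : (v', y) ∈ (A : Set (Euc n × Euc n)) := hv'
        have hmem : ((v' - v, 0) : Euc n × Euc n) ∈ (A : Set _) := by
          have := A.sub_mem hv' hv
          simpa using this
        have h1 := hsym (v'-v, 0) hmem (v, y) hv
        simp only [inner_zero_right] at h1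
        have h2 := inner_sub_left (𝕜 := ℝ) v' v y
        rw [h1] at h2
        have c1 := real_inner_comm y v'
        have c2 := real_inner_comm y v
        have h3 : ⟪y, v'⟫ = ⟪y, v⟫ := by linarith
        rw [h3]
    rw [hSval]
    unfold fenchel
    apply le_antisymm
    · refine iSup_le fun x => ?_
      by_cases hx : ∃ u, (x,u) ∈ (A : Set (Euc n × Euc n))
      · obtain ⟨u, hu⟩ := hx
        rw [hqval x u hu, ← EReal.coe_sub]
        apply EReal.coe_le_coe_iff.mpr
        have hm := hmono (x,u) hu (v,y) hv
        simp only at hm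
        have hs := hsym (v,y) hv (x,u) hu
        simp only at hs
        have hexp : ⟪x - v, u - y⟫ = ⟪x,u⟫ - ⟪x,y⟫ - ⟪v,u⟫ + ⟪v,y⟫ := by
          rw [inner_sub_left, inner_sub_right, inner_sub_right]; ring
        rw [hexp] at hm
        have h4 := real_inner_comm y x
        have h5 := real_inner_comm y v
        linarith
      · push_neg at hx
        have : qrel (A : Set (Euc n × Euc n)) x = ⊤ := by
          simp [qrel, hx]
        rw [this]
        simp
    · refine le_iSup_of_le v ?_
      rw [hqval v y hv, ← EReal.coe_sub]
      apply EReal.coe_le_coe_iff.mpr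
      rw [real_inner_comm y v]
      linarith
  · -- y ∉ ran A
    push_neg at hy
    have hRHS : qrel {p : Euc n × Euc n | (p.2, p.1) ∈ A} y = ⊤ := by
      refine le_antisymm le_top (le_iInf fun u => le_iInf fun hu => (hy u hu).elim)
    rw [hRHS]
    set R : Submodule ℝ (Euc n) := A.map (LinearMap.snd ℝ (Euc n) (Euc n)) with hR
    have hyR : y ∉ R := by
      intro h
      obtain ⟨⟨a, b⟩, hp, hp2⟩ := h
      simp only [LinearMap.snd_apply] at hp2
      subst hp2
      exact hy a hp
    set z := y - (R.orthogonalProjectionOnto y : Euc n) with hzdef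
    have hz : z ∈ Rᗮ := Submodule.sub_starProjection_mem_orthogonal (K := R) y
    have hz0 : z ≠ 0 := by
      intro h
      apply hyR
      have : y = (R.orthogonalProjectionOnto y : Euc n) := by
        rw [hzdef] at h
        exact sub_eq_zero.mp h
      rw [this]; exact (R.orthogonalProjectionOnto y).2
    have hyz : ⟪y, z⟫ = ‖z‖^2 := by
      have hp : ⟪(R.orthogonalProjectionOnto y : Euc n), z⟫ = 0 :=
        (Submodule.mem_orthogonal R z).mp hz _ (R.orthogonalProjectionOnto y).2
      have : y = (R.orthogonalProjectionOnto y : Euc n) + z := by rw [hzdef]; abel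
      rw [this, inner_add_left, hp, real_inner_self_eq_norm_sq]
      ring
    have hzA : ((z, 0) : Euc n × Euc n) ∈ (A : Set (Euc n × Euc n)) := by
      apply hmax.2
      intro q hq
      have h1 : ⟪z, q.2⟫ = 0 := by
        rw [real_inner_comm]
        exact (Submodule.mem_orthogonal R z).mp hz q.2 ⟨q, hq, rfl⟩
      have h2 := hpos q hq
      simp only [zero_sub, inner_sub_left, inner_neg_right, h1]
      linarith
    rw [EReal.eq_top_iff_forall_lt]
    intro r
    have hnz : (0:ℝ) < ‖z‖^2 := pow_pos (norm_pos_iff.mpr hz0) 2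
    set t := (r + 1) / ‖z‖^2 with ht
    have hle : ((t * ‖z‖^2 : ℝ) : EReal) ≤ fenchel (qrel (A : Set (Euc n × Euc n))) y := by
      refine le_iSup_of_le (t • z) ?_
      have hmem : ((t • z, 0) : Euc n × Euc n) ∈ (A : Set (Euc n × Euc n)) := by
        have := A.smul_mem t hzA
        simpa using this
      rw [hqval _ 0 hmem]
      simp only [inner_zero_right, mul_zero]
      rw [real_inner_smul_right, hyz]
      norm_num
    refine lt_of_lt_of_le ?_ hle
    rw [ht]
    have : (r + 1) / ‖z‖^2 * ‖z‖^2 = r + 1 := div_mul_cancel₀ _ (ne_of_gt hnz)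
    rw [this]
    exact_mod_cast (by linarith : r < r + 1)
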